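/- Error-feedback bound for the m-iterates of ADOM+: let χ ≥ 1, γ > 0, ν > 0, let W be a gossip map with parameter χ, and let m^k, y_g^k, z_g^k ∈ E with m^{k+1} = γν^{-1}(y_g^k + z_g^k) + m^k − W(γν^{-1}(y_g^k + z_g^k) + m^k). Then ‖m^k‖_P² ≤ 8χ²γ²ν^{-2}‖y_g^k + z_g^k‖_P² + 4χ(1 − (4χ)^{-1})‖m^k‖_P² − 4χ‖m^{k+1}‖_P². -/

import Mathlib

open scoped InnerProductSpace BigOperators

noncomputable section

/-- The product space `E = (ℝ^d)^n` with inner product `⟨x, y⟩ = ∑ᵢ ⟨xᵢ, yᵢ⟩`. -/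
abbrev E (n d : ℕ) : Type := PiLp 2 (fun _ : Fin n => EuclideanSpace ℝ (Fin d))

/-- The orthogonal projection `P` onto `L_c^⊥ = {z : ∑ᵢ zᵢ = 0}`:
`(Px)ᵢ = xᵢ − (1/n) ∑ⱼ xⱼ`. -/
def projP {n d : ℕ} (x : E n d) : E n d := WithLp.toLp 2 (fun i => x i - (n : ℝ)⁻¹ • ∑ j, x j)

/-- `W : E → E` is a gossip map with parameter `χ`: it is given by an `n × n` matrix acting
blockwise (i.e. `W = W̃ ⊗ I_d`), it vanishes on the consensus space `L_c`, its range lies in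
`L_c^⊥`, and `‖Wv − v‖² ≤ (1 − χ⁻¹)‖v‖²` for all `v ∈ L_c^⊥`. -/
def IsGossip {n d : ℕ} (χ : ℝ) (W : E n d → E n d) : Prop :=
  (∃ Wt : Matrix (Fin n) (Fin n) ℝ, ∀ (v : E n d) (i : Fin n), W v i = ∑ j, Wt i j • v j) ∧
  (∀ v : E n d, (∀ i j : Fin n, v i = v j) → W v = 0) ∧
  (∀ v : E n d, ∑ i, W v i = 0) ∧
  (∀ v : E n d, ∑ i, v i = 0 → ‖W v - v‖ ^ 2 ≤ (1 - χ⁻¹) * ‖v‖ ^ 2)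

/-- Bregman divergence `D_F(x, y) = F(x) − F(y) − ⟨∇F(y), x − y⟩` (here `G = ∇F`). -/
def DF {n d : ℕ} (F : E n d → ℝ) (G : E n d → E n d) (x y : E n d) : ℝ :=
  F x - F y - ⟪G y, x - y⟫_ℝ

/-- Primal Lyapunov function
`Ψ_x = (1/η + α)‖x − x*‖² + (2/τ₂)(D_F(x_f, x*) − (ν/2)‖x_f − x*‖²)`. -/
def PsiX {n d : ℕ} (F : E n d → ℝ) (G : E n d → E n d) (η α τ₂ ν : ℝ)
    (xs xk xfk : E n d) : ℝ :=
  (1 / η + α) * ‖xk - xs‖ ^ 2 + (2 / τ₂) * (DF F G xfk xs - (ν / 2) * ‖xfk - xs‖ ^ 2)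

/-- Dual Lyapunov function `Ψ_yz` (with `ẑ = z − P m`):
`(1/θ + β/2)‖y − y*‖² + (β/(2σ₂))‖y_f − y*‖² + (1/γ)‖ẑ − z*‖² + (4/(3γ))‖m‖_P²
  + (1/(νσ₂))‖y_f + z_f − (y* + z*)‖²`. -/
def PsiYZ {n d : ℕ} (θ β σ₂ γ ν : ℝ) (ys zs yk yfk zk zfk mk : E n d) : ℝ :=
  (1 / θ + β / 2) * ‖yk - ys‖ ^ 2 + (β / (2 * σ₂)) * ‖yfk - ys‖ ^ 2
    + (1 / γ) * ‖zk - projP mk - zs‖ ^ 2 + (4 / (3 * γ)) * ‖projP mk‖ ^ 2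
    + (1 / (ν * σ₂)) * ‖yfk + zfk - (ys + zs)‖ ^ 2

lemma projP_add {n d : ℕ} (x y : E n d) : projP (x + y) = projP x + projP y := by
  refine PiLp.ext fun i => ?_
  simp [projP, Finset.sum_add_distrib, smul_add]
  abel

lemma projP_smul {n d : ℕ} (c : ℝ) (x : E n d) : projP (c • x) = c • projP x := by
  refine PiLp.ext fun i => ?_
  simp [projP, Finset.smul_sum, smul_sub, smul_comm c]

lemma projP_sub {n d : ℕ} (x y : E n d) : projP (x - y) = projP x - projP y := by
  refine PiLp.ext fun i => ?_
  simp [projP, Finset.sum_sub_distrib, smul_sub]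
  abel

lemma sum_projP {n d : ℕ} (hn : 1 ≤ n) (x : E n d) : ∑ i, projP x i = 0 := by
  have hn' : (n : ℝ) ≠ 0 := by positivity
  simp only [projP, Finset.sum_sub_distrib, Finset.sum_const, Finset.card_fin]
  rw [← Nat.cast_smul_eq_nsmul ℝ, smul_smul, mul_inv_cancel₀ hn', one_smul, sub_self]

lemma projP_of_sum_zero {n d : ℕ} (x : E n d) (h : ∑ i, x i = 0) : projP x = x := by
  refine PiLp.ext fun i => ?_
  simp [projP, h]

lemma norm_projP_sq_le {n d : ℕ} (hn : 1 ≤ n) (χ : ℝ) (W : E n d → E n d)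
    (hW : IsGossip χ W) (h : E n d) :
    ‖projP (h - W h)‖ ^ 2 ≤ (1 - χ⁻¹) * ‖projP h‖ ^ 2 := by
  obtain ⟨⟨Wt, hWt⟩, hconst, hrange, hcontr⟩ := hW
  set p := projP h with hp
  have hsump : ∑ i, p i = 0 := sum_projP hn h
  -- W h = W p
  have hWhp : W h = W p := by
    have hq : W (WithLp.toLp 2 (fun _ => (n : ℝ)⁻¹ • ∑ j, h j)) = 0 :=
      hconst _ (fun i j => rfl)
    refine PiLp.ext fun i => ?_
    rw [hWt, hWt]
    have : ∀ j, h j = p j + (n : ℝ)⁻¹ • ∑ k, h k := by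
      intro j; simp [hp, projP]
    calc ∑ j, Wt i j • h j
        = ∑ j, (Wt i j • p j + Wt i j • ((n : ℝ)⁻¹ • ∑ k, h k)) := by
          refine Finset.sum_congr rfl fun j _ => ?_
          rw [this j, smul_add]
      _ = ∑ j, Wt i j • p j + ∑ j, Wt i j • ((n : ℝ)⁻¹ • ∑ k, h k) := by
          rw [Finset.sum_add_distrib]
      _ = ∑ j, Wt i j • p j := by
          have := congrArg (fun v : E n d => v i) hq
          simp only [hWt, WithLp.ofLp_toLp] at this
          simp only [this]
          simp
  have hPm1 : projP (h - W h) = p - W p := by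
    rw [projP_sub, projP_of_sum_zero (W h) (hrange h), hWhp, hp]
  rw [hPm1, ← norm_sub_rev]
  exact hcontr p hsump

set_option maxHeartbeats 1000000 in
/-- **Error-feedback bound for the m-iterates of ADOM+.**
Let `χ ≥ 1`, `γ > 0`, `ν > 0`, `W` a gossip map with parameter `χ`, and
`m^{k+1} = γν⁻¹(y_g^k + z_g^k) + m^k − W(γν⁻¹(y_g^k + z_g^k) + m^k)`. Then
`‖m^k‖_P² ≤ 8χ²γ²ν⁻²‖y_g^k + z_g^k‖_P² + 4χ(1 − (4χ)⁻¹)‖m^k‖_P² − 4χ‖m^{k+1}‖_P²`. -/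
theorem adom_plus_error_feedback
    {n d : ℕ} (hn : 1 ≤ n) (hd : 1 ≤ d)
    (χ γ ν : ℝ) (hχ : 1 ≤ χ) (hγ : 0 < γ) (hν : 0 < ν)
    (W : E n d → E n d) (hW : IsGossip χ W)
    (mk mk1 ygk zgk : E n d)
    (hmup : mk1 = (γ * ν⁻¹) • (ygk + zgk) + mk - W ((γ * ν⁻¹) • (ygk + zgk) + mk)) :
    ‖projP mk‖ ^ 2 ≤
      8 * χ ^ 2 * γ ^ 2 * (ν ^ 2)⁻¹ * ‖projP (ygk + zgk)‖ ^ 2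
        + 4 * χ * (1 - (4 * χ)⁻¹) * ‖projP mk‖ ^ 2
        - 4 * χ * ‖projP mk1‖ ^ 2 := by
  set c : ℝ := γ * ν⁻¹ with hc
  have hc0 : 0 ≤ c := by positivity
  set h : E n d := c • (ygk + zgk) + mk with hh
  have key : ‖projP mk1‖ ^ 2 ≤ (1 - χ⁻¹) * ‖projP h‖ ^ 2 := by
    rw [hmup]
    exact norm_projP_sq_le hn χ W hW h
  have hdecomp : projP h = c • projP (ygk + zgk) + projP mk := by
    rw [hh, projP_add, projP_smul]
  set A : ℝ := ‖projP (ygk + zgk)‖ with hA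
  set B : ℝ := ‖projP mk‖ with hB
  have hA0 : 0 ≤ A := norm_nonneg _
  have hB0 : 0 ≤ B := norm_nonneg _
  have htri : ‖projP h‖ ≤ c * A + B := by
    rw [hdecomp]
    calc ‖c • projP (ygk + zgk) + projP mk‖
        ≤ ‖c • projP (ygk + zgk)‖ + ‖projP mk‖ := norm_add_le _ _
      _ = c * A + B := by rw [norm_smul, Real.norm_eq_abs, abs_of_nonneg hc0]
  have hph : ‖projP h‖ ^ 2 ≤ (c * A + B) ^ 2 := by
    have := norm_nonneg (projP h)
    nlinarith
  have hχ0 : 0 < χ := lt_of_lt_of_le one_pos hχ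
  have key2 : χ * ‖projP mk1‖ ^ 2 ≤ (χ - 1) * (c * A + B) ^ 2 := by
    have h1 : χ * ((1 - χ⁻¹) * ‖projP h‖ ^ 2) = (χ - 1) * ‖projP h‖ ^ 2 := by
      field_simp
    have h2 : χ * ‖projP mk1‖ ^ 2 ≤ χ * ((1 - χ⁻¹) * ‖projP h‖ ^ 2) := by
      apply mul_le_mul_of_nonneg_left key hχ0.le
    rw [h1] at h2
    refine h2.trans ?_
    apply mul_le_mul_of_nonneg_left hph (by linarith)
  have hcoef : 4 * χ * (1 - (4 * χ)⁻¹) = 4 * χ - 1 := by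
    field_simp
  have hcsq : c ^ 2 = γ ^ 2 * (ν ^ 2)⁻¹ := by
    rw [hc]; field_simp
  have hM0 : 0 ≤ ‖projP mk1‖ ^ 2 := by positivity
  rw [hcoef]
  have hfinal : 4 * (χ - 1) * (c * A + B) ^ 2 ≤ 8 * χ ^ 2 * (c * A) ^ 2 + (4 * χ - 2) * B ^ 2 := by
    nlinarith [sq_nonneg ((2 * χ - 2) * (c * A) - B), sq_nonneg (c * A),
      mul_nonneg (mul_nonneg hc0 hA0) hB0, sq_nonneg B, mul_nonneg hc0 hA0,
      mul_nonneg (mul_nonneg (sub_nonneg.mpr hχ) (mul_nonneg hc0 hA0)) (mul_nonneg hc0 hA0)]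
  have hexp : 8 * χ ^ 2 * (c * A) ^ 2 = 8 * χ ^ 2 * γ ^ 2 * (ν ^ 2)⁻¹ * A ^ 2 := by
    rw [mul_pow, hcsq]; ring
  linarith [key2, hfinal, hexp]
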